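/- arXiv:1805.07081 — 4 statements merged into one kernel-verified Lean document; each statement's English description precedes it below -/
import Mathlib

section
/- Let k be a commutative ring, G a group, N a normal subgroup of G, H a subgroup of G, and M a k[H]-module. Then N ∩ H is a normal subgroup of H, the coinvariants M_{N∩H} carry a natural k[H/(N∩H)]-module structure, the quotient H/(N∩H) embeds canonically as a subgroup of G/N, and there is a natural isomorphism of k[G/N]-modules (k[G] ⊗_{k[H]} M)_N ≅ k[G/N] ⊗_{k[H/(N∩H)]} M_{N∩H}, where the N-coinvariants of the induced module are endowed with their natural k[G/N]-module structure. -/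
set_option linter.unusedSectionVars false

open scoped TensorProduct

noncomputable section

variable (k : Type*) [CommRing k] (G : Type*) [Group G] (N : Subgroup G) [N.Normal]
  (H : Subgroup G)
  (M : Type*) [AddCommGroup M] [Module k M] [Module (MonoidAlgebra k H) M]
  [IsScalarTower k (MonoidAlgebra k H) M] [SMulCommClass (MonoidAlgebra k H) k M]

/-- The submodule of `k[G] ⊗_k M` of balancing relations over `k[H]`:
`(x·h) ⊗ m - x ⊗ (h·m)`. Quotienting by it yields `k[G] ⊗_{k[H]} M`. -/
def balancedRel : Submodule k (MonoidAlgebra k G ⊗[k] M) :=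
  Submodule.span k
    { z | ∃ (x : MonoidAlgebra k G) (h : H) (m : M),
        z = (x * MonoidAlgebra.of k G (h : G)) ⊗ₜ[k] m -
          x ⊗ₜ[k] (MonoidAlgebra.of k H h • m) }

/-- The induced module `Ind_H^G M = k[G] ⊗_{k[H]} M`. -/
abbrev Induced : Type _ :=
  (MonoidAlgebra k G ⊗[k] M) ⧸ balancedRel k G H M

theorem balancedRel_le_comap_lmul (g : G) :
    balancedRel k G H M ≤
      (balancedRel k G H M).comap
        ((LinearMap.mulLeft k (MonoidAlgebra.of k G g)).rTensor M) := by
  rw [balancedRel, Submodule.span_le]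
  rintro z ⟨x, h, m, rfl⟩
  simp only [SetLike.mem_coe, Submodule.mem_comap, map_sub, LinearMap.rTensor_tmul,
    LinearMap.mulLeft_apply]
  rw [← mul_assoc]
  exact Submodule.subset_span ⟨MonoidAlgebra.of k G g * x, h, m, rfl⟩

/-- The action of `g ∈ G` on `Ind_H^G M` by left multiplication on the first factor. -/
def indSmul (g : G) : Induced k G H M →ₗ[k] Induced k G H M :=
  Submodule.mapQ _ _ ((LinearMap.mulLeft k (MonoidAlgebra.of k G g)).rTensor M)
    (balancedRel_le_comap_lmul k G H M g)

theorem indSmul_indSmul (a b : G) (w : Induced k G H M) :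
    indSmul k G H M a (indSmul k G H M b w) = indSmul k G H M (a * b) w := by
  obtain ⟨x, rfl⟩ := Submodule.Quotient.mk_surjective _ w
  have hm : (LinearMap.mulLeft k (MonoidAlgebra.of k G a)).comp
      (LinearMap.mulLeft k (MonoidAlgebra.of k G b)) =
      LinearMap.mulLeft k (MonoidAlgebra.of k G (a * b)) := by
    ext y
    simp only [LinearMap.coe_comp, Function.comp_apply, LinearMap.mulLeft_apply, map_mul,
      mul_assoc]
  simp only [indSmul, Submodule.mapQ_apply]
  rw [← hm, LinearMap.rTensor_comp, LinearMap.comp_apply]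

/-- The submodule of `Ind_H^G M` generated by the elements `n·z - z` for `n ∈ N`:
the quotient by it is the module of `N`-coinvariants of `Ind_H^G M`. -/
def indCoinvRelN : Submodule k (Induced k G H M) :=
  Submodule.span k
    { z | ∃ (n : N) (w : Induced k G H M), z = indSmul k G H M (n : G) w - w }

theorem indCoinvRelN_le_comap (g : G) :
    indCoinvRelN k G N H M ≤ (indCoinvRelN k G N H M).comap (indSmul k G H M g) := by
  rw [indCoinvRelN, Submodule.span_le]
  rintro z ⟨n, w, rfl⟩
  simp only [SetLike.mem_coe, Submodule.mem_comap, map_sub]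
  have h1 : indSmul k G H M g (indSmul k G H M (n : G) w) =
      indSmul k G H M (g * (n : G) * g⁻¹) (indSmul k G H M g w) := by
    rw [indSmul_indSmul, indSmul_indSmul]
    congr 1
    group
  rw [h1]
  exact Submodule.subset_span
    ⟨⟨g * (n : G) * g⁻¹, ‹N.Normal›.conj_mem (n : G) n.2 g⟩, indSmul k G H M g w, rfl⟩

/-- The `N`-coinvariants of the induced module `Ind_H^G M`. -/
abbrev CoinvInduced : Type _ :=
  Induced k G H M ⧸ indCoinvRelN k G N H M

/-- The action of `g ∈ G` on the `N`-coinvariants of `Ind_H^G M`; since `N` is normal,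
it factors through `G/N` and gives the natural `k[G/N]`-module structure. -/
def lhsSmul (g : G) : CoinvInduced k G N H M →ₗ[k] CoinvInduced k G N H M :=
  Submodule.mapQ _ _ (indSmul k G H M g) (indCoinvRelN_le_comap k G N H M g)

/-- The action of `h ∈ H` on `M`, as a `k`-linear map. -/
def mAct (h : H) : M →ₗ[k] M where
  toFun m := MonoidAlgebra.of k H h • m
  map_add' m₁ m₂ := smul_add _ m₁ m₂
  map_smul' c m := smul_comm _ c m

@[simp] theorem mAct_apply (h : H) (m : M) :
    mAct k G H M h m = MonoidAlgebra.of k H h • m := rfl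

/-- The submodule of `M` generated by the elements `h·m - m` for `h ∈ N ∩ H`: the
quotient by it is the module of `(N ∩ H)`-coinvariants of `M`. -/
def mCoinvRel : Submodule k M :=
  Submodule.span k
    { z | ∃ (h : H) (_ : (h : G) ∈ N) (m : M), z = MonoidAlgebra.of k H h • m - m }

theorem mCoinvRel_le_comap (h : H) :
    mCoinvRel k G N H M ≤ (mCoinvRel k G N H M).comap (mAct k G H M h) := by
  rw [mCoinvRel, Submodule.span_le]
  rintro z ⟨h', hh', m, rfl⟩
  simp only [SetLike.mem_coe, Submodule.mem_comap, map_sub, mAct_apply]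
  have h1 : MonoidAlgebra.of k H h • (MonoidAlgebra.of k H h' • m) =
      MonoidAlgebra.of k H (h * h' * h⁻¹) • (MonoidAlgebra.of k H h • m) := by
    rw [← mul_smul, ← mul_smul, ← map_mul, ← map_mul]
    congr 2
    group
  rw [h1]
  refine Submodule.subset_span ⟨h * h' * h⁻¹, ?_, MonoidAlgebra.of k H h • m, rfl⟩
  have : ((h * h' * h⁻¹ : H) : G) = (h : G) * (h' : G) * (h : G)⁻¹ := by push_cast; rfl
  rw [this]
  exact ‹N.Normal›.conj_mem (h' : G) hh' (h : G)

/-- The `(N ∩ H)`-coinvariants of `M`. -/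
abbrev MCoinv : Type _ :=
  M ⧸ mCoinvRel k G N H M

/-- The action of `h ∈ H` on the `(N ∩ H)`-coinvariants of `M`; it factors through
`H/(N ∩ H)` and gives the natural `k[H/(N ∩ H)]`-module structure. -/
def mActQ (h : H) : MCoinv k G N H M →ₗ[k] MCoinv k G N H M :=
  Submodule.mapQ _ _ (mAct k G H M h) (mCoinvRel_le_comap k G N H M h)

/-- The balancing relations in `k[G/N] ⊗_k M_{N∩H}` over `k[H/(N∩H)]`, where
`H/(N∩H)` is viewed inside `G/N`: quotienting yields `k[G/N] ⊗_{k[H/(N∩H)]} M_{N∩H}`. -/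
def rhsRel : Submodule k (MonoidAlgebra k (G ⧸ N) ⊗[k] MCoinv k G N H M) :=
  Submodule.span k
    { z | ∃ (x : MonoidAlgebra k (G ⧸ N)) (h : H) (m : MCoinv k G N H M),
        z = (x * MonoidAlgebra.of k (G ⧸ N) (((h : G) : G ⧸ N))) ⊗ₜ[k] m -
          x ⊗ₜ[k] (mActQ k G N H M h m) }

/-- The induced module `k[G/N] ⊗_{k[H/(N∩H)]} M_{N∩H}`. -/
abbrev RhsInduced : Type _ :=
  (MonoidAlgebra k (G ⧸ N) ⊗[k] MCoinv k G N H M) ⧸ rhsRel k G N H M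

theorem rhsRel_le_comap_lmul (g : G) :
    rhsRel k G N H M ≤
      (rhsRel k G N H M).comap
        ((LinearMap.mulLeft k (MonoidAlgebra.of k (G ⧸ N) ((g : G ⧸ N)))).rTensor
          (MCoinv k G N H M)) := by
  rw [rhsRel, Submodule.span_le]
  rintro z ⟨x, h, m, rfl⟩
  simp only [SetLike.mem_coe, Submodule.mem_comap, map_sub, LinearMap.rTensor_tmul,
    LinearMap.mulLeft_apply]
  rw [← mul_assoc]
  exact Submodule.subset_span
    ⟨MonoidAlgebra.of k (G ⧸ N) ((g : G ⧸ N)) * x, h, m, rfl⟩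

/-- The action of `g ∈ G` on `k[G/N] ⊗_{k[H/(N∩H)]} M_{N∩H}` by left multiplication by
the class of `g` on the first factor; this is the natural `k[G/N]`-module structure. -/
def rhsSmul (g : G) : RhsInduced k G N H M →ₗ[k] RhsInduced k G N H M :=
  Submodule.mapQ _ _
    ((LinearMap.mulLeft k (MonoidAlgebra.of k (G ⧸ N) ((g : G ⧸ N)))).rTensor
      (MCoinv k G N H M))
    (rhsRel_le_comap_lmul k G N H M g)

/-! ### Auxiliary constructions for the main theorem -/

theorem mapd_of (g : G) :
    MonoidAlgebra.mapDomain (⇑(QuotientGroup.mk' N)) (MonoidAlgebra.of k G g) =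
      MonoidAlgebra.of k (G ⧸ N) ((g : G ⧸ N)) := by
  rw [MonoidAlgebra.of_apply, MonoidAlgebra.of_apply]; exact MonoidAlgebra.mapDomain_single

theorem mapd_of_mul (g : G) (x : MonoidAlgebra k G) :
    MonoidAlgebra.mapDomain (⇑(QuotientGroup.mk' N)) (MonoidAlgebra.of k G g * x) =
      MonoidAlgebra.of k (G ⧸ N) ((g : G ⧸ N)) *
        MonoidAlgebra.mapDomain (⇑(QuotientGroup.mk' N)) x :=
  (MonoidAlgebra.mapDomain_mul (QuotientGroup.mk' N) _ x).trans
    (congrArg (· * MonoidAlgebra.mapDomain (⇑(QuotientGroup.mk' N)) x) (mapd_of k G N g))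

theorem mapd_mul_of (x : MonoidAlgebra k G) (h : G) :
    MonoidAlgebra.mapDomain (⇑(QuotientGroup.mk' N)) (x * MonoidAlgebra.of k G h) =
      MonoidAlgebra.mapDomain (⇑(QuotientGroup.mk' N)) x *
        MonoidAlgebra.of k (G ⧸ N) ((h : G ⧸ N)) :=
  (MonoidAlgebra.mapDomain_mul (QuotientGroup.mk' N) x _).trans
    (congrArg (MonoidAlgebra.mapDomain (⇑(QuotientGroup.mk' N)) x * ·) (mapd_of k G N h))

/-- The basic map `k[G] ⊗ M → k[G/N] ⊗ M_{N∩H}`. -/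
def fwd0 : MonoidAlgebra k G ⊗[k] M →ₗ[k] MonoidAlgebra k (G ⧸ N) ⊗[k] MCoinv k G N H M :=
  TensorProduct.map
    (MonoidAlgebra.mapDomainLinearMap k k (QuotientGroup.mk' N) :
      MonoidAlgebra k G →ₗ[k] MonoidAlgebra k (G ⧸ N))
    (mCoinvRel k G N H M).mkQ

theorem fwd0_tmul (x : MonoidAlgebra k G) (m : M) :
    fwd0 k G N H M (x ⊗ₜ m) =
      MonoidAlgebra.mapDomain (QuotientGroup.mk' N) x ⊗ₜ Submodule.Quotient.mk m := by
  simp only [fwd0, TensorProduct.map_tmul, Finsupp.lmapDomain_apply]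
  rfl

theorem fwd0_comp (g : G) :
    (fwd0 k G N H M).comp ((LinearMap.mulLeft k (MonoidAlgebra.of k G g)).rTensor M) =
      ((LinearMap.mulLeft k (MonoidAlgebra.of k (G ⧸ N) ((g : G ⧸ N)))).rTensor
        (MCoinv k G N H M)).comp (fwd0 k G N H M) := by
  apply TensorProduct.ext'
  intro x m
  simp only [LinearMap.coe_comp, Function.comp_apply, LinearMap.rTensor_tmul,
    LinearMap.mulLeft_apply, fwd0_tmul]
  congr 1
  exact mapd_of_mul k G N g x

theorem fwd1_ker :
    balancedRel k G H M ≤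
      LinearMap.ker ((rhsRel k G N H M).mkQ.comp (fwd0 k G N H M)) := by
  rw [balancedRel, Submodule.span_le]
  rintro z ⟨x, h, m, rfl⟩
  simp only [SetLike.mem_coe, LinearMap.mem_ker, LinearMap.coe_comp, Function.comp_apply]
  have h1 := mapd_mul_of k G N x ((h : G))
  have h2 : (Submodule.Quotient.mk (MonoidAlgebra.of k H h • m) : MCoinv k G N H M) =
      mActQ k G N H M h (Submodule.Quotient.mk m) := by
    simp [mActQ, Submodule.mapQ_apply]
  rw [map_sub, fwd0_tmul, fwd0_tmul, h1, h2, Submodule.mkQ_apply,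
    Submodule.Quotient.mk_eq_zero]
  exact Submodule.subset_span
    ⟨MonoidAlgebra.mapDomain (⇑(QuotientGroup.mk' N)) x, h, Submodule.Quotient.mk m, rfl⟩

/-- The forward map on `Ind_H^G M`. -/
def fwd2 : Induced k G H M →ₗ[k] RhsInduced k G N H M :=
  Submodule.liftQ _ ((rhsRel k G N H M).mkQ.comp (fwd0 k G N H M)) (fwd1_ker k G N H M)

theorem fwd2_mk (x : MonoidAlgebra k G ⊗[k] M) :
    fwd2 k G N H M (Submodule.Quotient.mk x) = Submodule.Quotient.mk (fwd0 k G N H M x) :=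
  rfl

theorem fwd2_ker : indCoinvRelN k G N H M ≤ LinearMap.ker (fwd2 k G N H M) := by
  rw [indCoinvRelN, Submodule.span_le]
  rintro z ⟨n, w, rfl⟩
  obtain ⟨x, rfl⟩ := Submodule.Quotient.mk_surjective _ w
  simp only [SetLike.mem_coe, LinearMap.mem_ker, map_sub]
  rw [sub_eq_zero]
  have : indSmul k G H M (n : G) (Submodule.Quotient.mk x) =
      Submodule.Quotient.mk
        (((LinearMap.mulLeft k (MonoidAlgebra.of k G ((n : G)))).rTensor M) x) := by
    simp [indSmul, Submodule.mapQ_apply]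
  rw [this, fwd2_mk, fwd2_mk]
  congr 1
  have := congrFun (congrArg DFunLike.coe (fwd0_comp k G N H M (n : G))) x
  simp only [LinearMap.coe_comp, Function.comp_apply] at this
  rw [this]
  have hn1 : ((n : G) : G ⧸ N) = 1 := (QuotientGroup.eq_one_iff _).2 n.2
  rw [hn1, show MonoidAlgebra.of k (G ⧸ N) (1 : G ⧸ N) = 1 from map_one _,
    LinearMap.mulLeft_one, LinearMap.rTensor_id, LinearMap.id_apply]

/-- The forward map on `N`-coinvariants. -/
def fwd : CoinvInduced k G N H M →ₗ[k] RhsInduced k G N H M :=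
  Submodule.liftQ _ (fwd2 k G N H M) (fwd2_ker k G N H M)

theorem fwd_mk (x : MonoidAlgebra k G ⊗[k] M) :
    fwd k G N H M (Submodule.Quotient.mk (Submodule.Quotient.mk x)) =
      Submodule.Quotient.mk (fwd0 k G N H M x) :=
  rfl

/-- `m ↦ [[of g ⊗ m]]`. -/
def bwdB0 (g : G) : M →ₗ[k] CoinvInduced k G N H M :=
  (indCoinvRelN k G N H M).mkQ.comp ((balancedRel k G H M).mkQ.comp
    (TensorProduct.mk k (MonoidAlgebra k G) M (MonoidAlgebra.of k G g)))

theorem bwdB0_apply (g : G) (m : M) :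
    bwdB0 k G N H M g m =
      Submodule.Quotient.mk (Submodule.Quotient.mk (MonoidAlgebra.of k G g ⊗ₜ m)) :=
  rfl

theorem bwdB0_mul_left (n : G) (hn : n ∈ N) (g : G) (m : M) :
    bwdB0 k G N H M (n * g) m = bwdB0 k G N H M g m := by
  rw [bwdB0_apply, bwdB0_apply, Submodule.Quotient.eq]
  have : (Submodule.Quotient.mk (MonoidAlgebra.of k G (n * g) ⊗ₜ m) : Induced k G H M) =
      indSmul k G H M n (Submodule.Quotient.mk (MonoidAlgebra.of k G g ⊗ₜ m)) := by
    simp [indSmul, Submodule.mapQ_apply, map_mul]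
  rw [this]
  exact Submodule.subset_span
    ⟨⟨n, hn⟩, Submodule.Quotient.mk (MonoidAlgebra.of k G g ⊗ₜ m), rfl⟩

theorem bwdB0_smul (g : G) (h : H) (m : M) :
    bwdB0 k G N H M g (MonoidAlgebra.of k H h • m) = bwdB0 k G N H M (g * (h : G)) m := by
  rw [bwdB0_apply, bwdB0_apply]
  congr 1
  rw [Submodule.Quotient.eq]
  have : MonoidAlgebra.of k G g ⊗ₜ[k] (MonoidAlgebra.of k H h • m) -
      MonoidAlgebra.of k G (g * (h : G)) ⊗ₜ[k] m =
      -((MonoidAlgebra.of k G g * MonoidAlgebra.of k G ((h : G))) ⊗ₜ[k] m -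
        MonoidAlgebra.of k G g ⊗ₜ[k] (MonoidAlgebra.of k H h • m)) := by
    rw [map_mul]; abel
  rw [this]
  exact neg_mem (Submodule.subset_span ⟨MonoidAlgebra.of k G g, h, m, rfl⟩)

theorem bwdB0_ker (g : G) : mCoinvRel k G N H M ≤ LinearMap.ker (bwdB0 k G N H M g) := by
  rw [mCoinvRel, Submodule.span_le]
  rintro z ⟨h, hh, m, rfl⟩
  simp only [SetLike.mem_coe, LinearMap.mem_ker, map_sub, sub_eq_zero]
  rw [bwdB0_smul]
  have hg : g * (h : G) = (g * (h : G) * g⁻¹) * g := by group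
  rw [hg, bwdB0_mul_left k G N H M _ (‹N.Normal›.conj_mem _ hh g)]

/-- `m̄ ↦ [[of g ⊗ m]]` on `(N∩H)`-coinvariants. -/
def bwdB1 (g : G) : MCoinv k G N H M →ₗ[k] CoinvInduced k G N H M :=
  Submodule.liftQ _ (bwdB0 k G N H M g) (bwdB0_ker k G N H M g)

theorem bwdB1_mk (g : G) (m : M) :
    bwdB1 k G N H M g (Submodule.Quotient.mk m) = bwdB0 k G N H M g m :=
  rfl

theorem bwdB1_eq (g g' : G) (hgg' : (g : G ⧸ N) = (g' : G ⧸ N)) :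
    bwdB1 k G N H M g = bwdB1 k G N H M g' := by
  apply LinearMap.ext
  intro mq
  obtain ⟨m, rfl⟩ := Submodule.Quotient.mk_surjective _ mq
  rw [bwdB1_mk, bwdB1_mk]
  rw [QuotientGroup.eq] at hgg'
  have hg' : g' = (g * (g⁻¹ * g') * g⁻¹) * g := by group
  rw [hg', bwdB0_mul_left k G N H M _ (‹N.Normal›.conj_mem _ hgg' g)]

/-- `bwdB1` descended to `G/N`. -/
def bwdB (q : G ⧸ N) : MCoinv k G N H M →ₗ[k] CoinvInduced k G N H M :=
  bwdB1 k G N H M q.out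

theorem bwdB_mk (g : G) : bwdB k G N H M ((g : G ⧸ N)) = bwdB1 k G N H M g :=
  bwdB1_eq k G N H M _ _ (by rw [QuotientGroup.out_eq'])

/-- The backward bilinear map. -/
def bwdBil : MonoidAlgebra k (G ⧸ N) →ₗ[k] MCoinv k G N H M →ₗ[k] CoinvInduced k G N H M :=
  (Finsupp.lsum k fun q => LinearMap.toSpanSingleton k _ (bwdB k G N H M q)) ∘ₗ
    (MonoidAlgebra.coeffLinearEquiv k).toLinearMap

theorem bwdBil_single (q : G ⧸ N) (c : k) :
    bwdBil k G N H M (MonoidAlgebra.single q c) = c • bwdB k G N H M q := by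
  change (Finsupp.lsum k fun q => LinearMap.toSpanSingleton k _ (bwdB k G N H M q))
    (Finsupp.single q c) = _
  erw [Finsupp.lsum_single]
  rfl

/-- The backward map on the tensor product. -/
def bwd0 : MonoidAlgebra k (G ⧸ N) ⊗[k] MCoinv k G N H M →ₗ[k] CoinvInduced k G N H M :=
  TensorProduct.lift (bwdBil k G N H M)

theorem bwd0_single (g : G) (c : k) (m : M) :
    bwd0 k G N H M (MonoidAlgebra.single ((g : G ⧸ N)) c ⊗ₜ Submodule.Quotient.mk m) =
      c • Submodule.Quotient.mk (Submodule.Quotient.mk (MonoidAlgebra.of k G g ⊗ₜ m)) := by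
  rw [bwd0, TensorProduct.lift.tmul, bwdBil_single, LinearMap.smul_apply, bwdB_mk,
    bwdB1_mk, bwdB0_apply]

theorem bwd0_ker : rhsRel k G N H M ≤ LinearMap.ker (bwd0 k G N H M) := by
  rw [rhsRel, Submodule.span_le]
  rintro z ⟨x, h, mq, rfl⟩
  obtain ⟨m, rfl⟩ := Submodule.Quotient.mk_surjective _ mq
  simp only [SetLike.mem_coe, LinearMap.mem_ker, map_sub, sub_eq_zero]
  induction x using MonoidAlgebra.induction_linear with
  | zero => simp
  | add f g hf hg =>
    rw [add_mul, TensorProduct.add_tmul, TensorProduct.add_tmul, map_add, map_add, hf, hg]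
  | single q c =>
    obtain ⟨g, rfl⟩ := QuotientGroup.mk_surjective q
    have h1 : MonoidAlgebra.single ((g : G ⧸ N)) c *
        MonoidAlgebra.of k (G ⧸ N) (((h : G) : G ⧸ N)) =
        MonoidAlgebra.single ((((g * (h : G)) : G) : G ⧸ N)) c := by
      have hs := MonoidAlgebra.single_mul_single (R := k) ((g : G ⧸ N))
        (((h : G) : G ⧸ N)) c 1
      rw [mul_one] at hs
      rw [MonoidAlgebra.of_apply, hs, QuotientGroup.mk_mul]
    have h2 : mActQ k G N H M h (Submodule.Quotient.mk m) =
        Submodule.Quotient.mk (MonoidAlgebra.of k H h • m) := by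
      simp [mActQ, Submodule.mapQ_apply]
    rw [h1, h2, bwd0_single, bwd0_single]
    rw [← bwdB0_apply, ← bwdB0_apply, bwdB0_smul]

/-- The backward map. -/
def bwd : RhsInduced k G N H M →ₗ[k] CoinvInduced k G N H M :=
  Submodule.liftQ _ (bwd0 k G N H M) (bwd0_ker k G N H M)

theorem bwd_mk (x : MonoidAlgebra k (G ⧸ N) ⊗[k] MCoinv k G N H M) :
    bwd k G N H M (Submodule.Quotient.mk x) = bwd0 k G N H M x :=
  rfl

theorem fwd_mk_single (g : G) (c : k) (m : M) :
    fwd k G N H M (Submodule.Quotient.mk (Submodule.Quotient.mk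
        ((MonoidAlgebra.single g c : MonoidAlgebra k G) ⊗ₜ m))) =
      Submodule.Quotient.mk
        ((MonoidAlgebra.single ((g : G ⧸ N)) c : MonoidAlgebra k (G ⧸ N)) ⊗ₜ
          Submodule.Quotient.mk m) := by
  rw [fwd_mk, fwd0_tmul]
  congr 2
  rw [MonoidAlgebra.mapDomain_single]
  rfl

theorem fwd_bwd (z : RhsInduced k G N H M) :
    fwd k G N H M (bwd k G N H M z) = z := by
  obtain ⟨t, rfl⟩ := Submodule.Quotient.mk_surjective _ z
  rw [bwd_mk]
  induction t with
  | zero => simp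
  | add a b ha hb => rw [map_add, map_add, ha, hb, Submodule.Quotient.mk_add]
  | tmul x mq =>
    obtain ⟨m, rfl⟩ := Submodule.Quotient.mk_surjective _ mq
    induction x using MonoidAlgebra.induction_linear with
    | zero => simp
    | add f g hf hg =>
      rw [TensorProduct.add_tmul, map_add, map_add, hf, hg, ← Submodule.Quotient.mk_add,
        ← TensorProduct.add_tmul]
    | single q c =>
      obtain ⟨g, rfl⟩ := QuotientGroup.mk_surjective q
      rw [bwd0_single, map_smul]
      have : (Submodule.Quotient.mk (MonoidAlgebra.of k G g ⊗ₜ m) : Induced k G H M) =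
          Submodule.Quotient.mk ((MonoidAlgebra.single g 1 : MonoidAlgebra k G) ⊗ₜ m) := rfl
      rw [this, fwd_mk_single]
      rw [← Submodule.Quotient.mk_smul, TensorProduct.smul_tmul', MonoidAlgebra.smul_single,
        smul_eq_mul, mul_one]

theorem bwd_fwd (z : CoinvInduced k G N H M) :
    bwd k G N H M (fwd k G N H M z) = z := by
  obtain ⟨w, rfl⟩ := Submodule.Quotient.mk_surjective _ z
  obtain ⟨t, rfl⟩ := Submodule.Quotient.mk_surjective _ w
  induction t with
  | zero => simp
  | add a b ha hb =>
    rw [Submodule.Quotient.mk_add, Submodule.Quotient.mk_add, map_add, map_add, ha, hb]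
  | tmul x m =>
    induction x using MonoidAlgebra.induction_linear with
    | zero =>
      rw [TensorProduct.zero_tmul]
      simp
    | add f g hf hg =>
      rw [TensorProduct.add_tmul, Submodule.Quotient.mk_add, Submodule.Quotient.mk_add,
        map_add, map_add, hf, hg]
    | single a c =>
      rw [fwd_mk_single, bwd_mk, bwd0_single]
      rw [← Submodule.Quotient.mk_smul, ← Submodule.Quotient.mk_smul,
        TensorProduct.smul_tmul']
      congr 2
      rw [MonoidAlgebra.of_apply]
      rw [MonoidAlgebra.smul_single, smul_eq_mul, mul_one]

theorem fwd_lhsSmul (g : G) (z : CoinvInduced k G N H M) :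
    fwd k G N H M (lhsSmul k G N H M g z) = rhsSmul k G N H M g (fwd k G N H M z) := by
  obtain ⟨w, rfl⟩ := Submodule.Quotient.mk_surjective _ z
  obtain ⟨t, rfl⟩ := Submodule.Quotient.mk_surjective _ w
  have h1 : lhsSmul k G N H M g (Submodule.Quotient.mk (Submodule.Quotient.mk t)) =
      Submodule.Quotient.mk (Submodule.Quotient.mk
        (((LinearMap.mulLeft k (MonoidAlgebra.of k G g)).rTensor M) t)) := by
    simp [lhsSmul, indSmul, Submodule.mapQ_apply]
  rw [h1, fwd_mk, fwd_mk]
  have h2 : rhsSmul k G N H M g (Submodule.Quotient.mk (fwd0 k G N H M t)) =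
      Submodule.Quotient.mk
        (((LinearMap.mulLeft k (MonoidAlgebra.of k (G ⧸ N) ((g : G ⧸ N)))).rTensor
          (MCoinv k G N H M)) (fwd0 k G N H M t)) := by
    simp [rhsSmul, Submodule.mapQ_apply]
  rw [h2]
  congr 1
  exact congrFun (congrArg DFunLike.coe (fwd0_comp k G N H M g)) t

/-- Let `N ⊴ G`, `H ≤ G`, and let `M` be a `k[H]`-module. Then `N ∩ H` is normal in `H`,
the quotient `H/(N∩H)` embeds canonically in `G/N`, and there is a natural isomorphism of
`k[G/N]`-modules `(k[G] ⊗_{k[H]} M)_N ≅ k[G/N] ⊗_{k[H/(N∩H)]} M_{N∩H}`, expressed here as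
a `k`-linear isomorphism commuting with the (descended) `G`-actions on both sides. -/
theorem coinvariants_induced_equiv_induced_coinvariants :
    (N.subgroupOf H).Normal ∧
    Function.Injective (QuotientGroup.map (N.subgroupOf H) N H.subtype le_rfl) ∧
    ∃ e : CoinvInduced k G N H M ≃ₗ[k] RhsInduced k G N H M,
      ∀ (g : G) (z : CoinvInduced k G N H M),
        e (lhsSmul k G N H M g z) = rhsSmul k G N H M g (e z) := by
  refine ⟨Subgroup.normal_subgroupOf, ?_, ?_⟩
  · intro a b hab
    obtain ⟨a, rfl⟩ := QuotientGroup.mk_surjective a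
    obtain ⟨b, rfl⟩ := QuotientGroup.mk_surjective b
    change ((H.subtype a : G) : G ⧸ N) = ((H.subtype b : G) : G ⧸ N) at hab
    rw [QuotientGroup.eq] at hab
    rw [QuotientGroup.eq]
    simpa [Subgroup.mem_subgroupOf] using hab
  · refine ⟨LinearEquiv.ofLinear (fwd k G N H M) (bwd k G N H M)
      (LinearMap.ext (fwd_bwd k G N H M)) (LinearMap.ext (bwd_fwd k G N H M)), ?_⟩
    intro g z
    exact fwd_lhsSmul k G N H M g z

end
end

section
/- Let k be a field, V₀ a finite-dimensional k-vector space, A : V₀ → V₀ a k-linear map, and n ≥ 1 an integer. Let V = V₀ ⊗ V₀ ⊗ ⋯ ⊗ V₀ (the n-fold tensor power over k) and let Φ : V → V be the unique k-linear endomorphism satisfying Φ(v₀ ⊗ v₁ ⊗ ⋯ ⊗ v_{n−1}) = v₁ ⊗ v₂ ⊗ ⋯ ⊗ v_{n−1} ⊗ A(v₀) for all v₀, …, v_{n−1} ∈ V₀. Then trace(Φ : V → V) = trace(A : V₀ → V₀). -/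
open scoped TensorProduct PiTensorProduct

/-- Saito–Shintani-type trace identity: if `Φ` is the endomorphism of the `n`-fold tensor
power `V₀ ⊗ ⋯ ⊗ V₀` sending `v₀ ⊗ v₁ ⊗ ⋯ ⊗ v_{n-1}` to `v₁ ⊗ ⋯ ⊗ v_{n-1} ⊗ A v₀`,
then `trace Φ = trace A`. -/
theorem trace_cyclic_tensor_power
    (k : Type*) [Field k] (V₀ : Type*) [AddCommGroup V₀] [Module k V₀]
    [FiniteDimensional k V₀]
    (A : V₀ →ₗ[k] V₀) (n : ℕ) (hn : 1 ≤ n)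
    (Φ : (⨂[k]^n V₀) →ₗ[k] (⨂[k]^n V₀))
    (hΦ : ∀ v : Fin n → V₀,
      Φ (PiTensorProduct.tprod k v) =
        PiTensorProduct.tprod k (fun i : Fin n =>
          if h : (i : ℕ) + 1 < n then v ⟨(i : ℕ) + 1, h⟩ else A (v ⟨0, by omega⟩))) :
    LinearMap.trace k (⨂[k]^n V₀) Φ = LinearMap.trace k V₀ A := by
  classical
  set m := Module.finrank k V₀ with hm
  let b : Module.Basis (Fin m) k V₀ := Module.finBasis k V₀
  -- the candidate basis vectors of the tensor power
  let t : (Fin n → Fin m) → (⨂[k]^n V₀) := fun f => PiTensorProduct.tprod k (fun i => b (f i))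
  -- dual functionals
  let φ : (Fin n → Fin m) → ((⨂[k]^n V₀) →ₗ[k] k) := fun f =>
    PiTensorProduct.lift ((MultilinearMap.mkPiAlgebra k (Fin n) k).compLinearMap
      (fun i => b.coord (f i)))
  have hφ : ∀ f (v : Fin n → V₀),
      φ f (PiTensorProduct.tprod k v) = ∏ i, b.repr (v i) (f i) := by
    intro f v
    simp [φ, Module.Basis.coord_apply]
  have hφt : ∀ f g, φ f (t g) = if f = g then 1 else 0 := by
    intro f g
    rw [hφ]
    by_cases h : f = g
    · subst h; simp
    · rw [if_neg h]
      obtain ⟨i, hi⟩ := Function.ne_iff.mp h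
      refine Finset.prod_eq_zero (Finset.mem_univ i) ?_
      simp [Finsupp.single_apply, Ne.symm hi]
  have hli : LinearIndependent k t := by
    rw [linearIndependent_iff']
    intro s g hg i hi
    have := congrArg (φ i) hg
    rw [map_sum, map_zero] at this
    simp only [map_smul, hφt, smul_eq_mul, mul_ite, mul_one, mul_zero] at this
    rwa [Finset.sum_ite_eq, if_pos hi] at this
  have hspan : ⊤ ≤ Submodule.span k (Set.range t) := by
    refine le_trans (le_of_eq (PiTensorProduct.span_tprod_eq_top
      (s := fun _ : Fin n => V₀) (R := k)).symm) (Submodule.span_le.mpr ?_)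
    rintro x ⟨v, rfl⟩
    have hv : (PiTensorProduct.tprod k) v
        = ∑ f : Fin n → Fin m, (∏ i, b.repr (v i) (f i)) • t f := by
      calc (PiTensorProduct.tprod k) v
          = (PiTensorProduct.tprod k) (fun i => ∑ j, b.repr (v i) j • b j) := by
            congr 1; funext i; rw [b.sum_repr]
        _ = ∑ f : Fin n → Fin m,
              (PiTensorProduct.tprod k) (fun i => b.repr (v i) (f i) • b (f i)) :=
            MultilinearMap.map_sum _ _
        _ = _ := by
            refine Finset.sum_congr rfl fun f _ => ?_
            rw [MultilinearMap.map_smul_univ]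
    rw [hv]
    exact Submodule.sum_mem _ fun f _ =>
      Submodule.smul_mem _ _ (Submodule.subset_span ⟨f, rfl⟩)
  let B : Module.Basis (Fin n → Fin m) k (⨂[k]^n V₀) := Module.Basis.mk hli hspan
  have hB : ∀ f, B f = t f := fun f => Module.Basis.mk_apply hli hspan f
  -- the coordinate functionals of `B` are the `φ f`
  have hcoord : ∀ f (x : ⨂[k]^n V₀), B.repr x f = φ f x := by
    intro f x
    have : (B.coord f : (⨂[k]^n V₀) →ₗ[k] k) = φ f := by
      refine Module.Basis.ext B fun g => ?_
      rw [Module.Basis.coord_apply, Module.Basis.repr_self, hB, hφt, Finsupp.single_apply]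
      by_cases h : g = f
      · simp [h]
      · simp [h, Ne.symm h]
    simpa [Module.Basis.coord_apply] using DFunLike.congr_fun this x
  -- compute the trace of Φ
  rw [LinearMap.trace_eq_matrix_trace k B Φ, LinearMap.trace_eq_matrix_trace k b A,
    Matrix.trace, Matrix.trace]
  have key : ∀ f : Fin n → Fin m,
      Matrix.diag (LinearMap.toMatrix B B Φ) f =
        (∏ i : Fin n, if h : (i : ℕ) + 1 < n then (if f i = f ⟨(i : ℕ) + 1, h⟩ then (1 : k) else 0)
          else b.repr (A (b (f ⟨0, by omega⟩))) (f i)) := by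
    intro f
    rw [Matrix.diag_apply, LinearMap.toMatrix_apply, hB, hcoord]
    simp only [t]
    rw [hΦ, hφ]
    refine Finset.prod_congr rfl fun i _ => ?_
    by_cases h : (i : ℕ) + 1 < n
    · rw [dif_pos h, dif_pos h]
      simp [Finsupp.single_apply, eq_comm]
    · rw [dif_neg h, dif_neg h]
  simp only [key]
  -- the only nonzero diagonal terms come from constant functions
  let e : Fin m → (Fin n → Fin m) := fun c _ => c
  have he : Function.Injective e := by
    intro c d h
    exact congrFun h ⟨0, by omega⟩
  rw [show (Finset.univ : Finset (Fin n → Fin m))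
      = Finset.univ.image e ∪ (Finset.univ \ Finset.univ.image e) by
        rw [Finset.union_sdiff_of_subset (Finset.subset_univ _)]]
  rw [Finset.sum_union (Finset.disjoint_sdiff)]
  have hzero : ∑ f ∈ Finset.univ \ Finset.univ.image e,
      (∏ i : Fin n, if h : (i : ℕ) + 1 < n then (if f i = f ⟨(i : ℕ) + 1, h⟩ then (1 : k) else 0)
          else b.repr (A (b (f ⟨0, by omega⟩))) (f i)) = 0 := by
    refine Finset.sum_eq_zero fun f hf => ?_
    rw [Finset.mem_sdiff, Finset.mem_image] at hf
    -- f is not constant, so some adjacent pair differs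
    have hnc : ¬ ∀ j (h : j + 1 < n), f ⟨j + 1, h⟩ = f ⟨j, by omega⟩ := by
      intro hall
      refine hf.2 ⟨f ⟨0, by omega⟩, Finset.mem_univ _, ?_⟩
      funext i
      have : ∀ j (hj : j < n), f ⟨j, hj⟩ = f ⟨0, by omega⟩ := by
        intro j
        induction j with
        | zero => intro hj; rfl
        | succ p ih => intro hj; rw [hall p hj, ih (by omega)]
      exact (this i.1 i.2).symm
    push_neg at hnc
    obtain ⟨j, hj, hne⟩ := hnc
    refine Finset.prod_eq_zero (Finset.mem_univ (⟨j, by omega⟩ : Fin n)) ?_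
    rw [dif_pos hj]
    exact if_neg fun h => hne h.symm
  rw [hzero, add_zero, Finset.sum_image (fun x _ y _ h => he h)]
  refine Finset.sum_congr rfl fun c _ => ?_
  rw [Matrix.diag_apply, LinearMap.toMatrix_apply]
  rw [Finset.prod_eq_single_of_mem (⟨n - 1, by omega⟩ : Fin n) (Finset.mem_univ _)
    (fun i _ hi => by
      have h : (i : ℕ) + 1 < n := by
        have h1 : (i : ℕ) < n := i.2
        have h2 : (i : ℕ) ≠ n - 1 := fun h => hi (Fin.ext h)
        omega
      rw [dif_pos h]
      simp [e])]
  have h : ¬ ((n - 1 : ℕ) + 1 < n) := by omega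
  rw [dif_neg h]
end

section
/- Let F be a field and K = F(ϖ) a field extension generated by an element ϖ that is algebraic and separable over F, with minimal polynomial Q ∈ F[u]. Let R be any commutative F-algebra and n ≥ 1 an integer. Then the R-algebra homomorphism R[u] → (R ⊗_F K)[z]/(zⁿ) sending u to z + (1⊗ϖ) maps Qⁿ into the ideal (zⁿ), hence descends to an R-algebra homomorphism R[u]/(Qⁿ) → (R ⊗_F K)[z]/(zⁿ), and this homomorphism is an isomorphism. -/
open scoped TensorProduct

open Polynomial

/-- The substitution homomorphism `R[u] → (R ⊗_F K)[z]/(zⁿ)`, `u ↦ z + 1⊗ϖ`,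
before passing to the quotient: `R[u] → (R ⊗_F K)[z]`. -/
noncomputable def substHom (F : Type*) [Field F] {K : Type*} [Field K] [Algebra F K]
    (ϖ : K) (R : Type*) [CommRing R] [Algebra F R] :
    Polynomial R →+* Polynomial (R ⊗[F] K) :=
  Polynomial.eval₂RingHom
    ((Polynomial.C : (R ⊗[F] K) →+* Polynomial (R ⊗[F] K)).comp
      (algebraMap R (R ⊗[F] K)))
    (Polynomial.X + Polynomial.C ((1 : R) ⊗ₜ[F] ϖ))

theorem newton_lemma {S : Type*} [CommRing S] (f : S[X]) (I : Ideal S) (b s : S)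
    (hb : f.eval b ∈ I) (hs : f.derivative.eval b * s - 1 ∈ I) :
    ∀ k : ℕ, 1 ≤ k → ∃ a : S, a - b ∈ I ∧ f.eval a ∈ I ^ k := by
  intro k hk
  induction k with
  | zero => omega
  | succ k ih =>
    rcases Nat.eq_or_lt_of_le hk with h1 | h1
    · exact ⟨b, by simp, by simpa [← h1] using hb⟩
    · obtain ⟨a, hab, ha⟩ := ih (by omega)
      have haI : f.eval a ∈ I := Ideal.pow_le_self (by omega) ha
      refine ⟨a + (-(f.eval a * s)), ?_, ?_⟩
      · have h2 : f.eval a * s ∈ I := Ideal.mul_mem_right _ _ haI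
        have := I.add_mem hab (I.neg_mem h2)
        convert this using 1; ring
      · obtain ⟨c, hc⟩ := f.binomExpansion a (-(f.eval a * s))
        rw [hc]
        have hd : f.derivative.eval a * s - 1 ∈ I := by
          obtain ⟨t, ht⟩ := Polynomial.sub_dvd_eval_sub a b f.derivative
          have m1 : (f.derivative.eval a - f.derivative.eval b) * s ∈ I := by
            rw [ht]
            exact Ideal.mul_mem_right _ _ (Ideal.mul_mem_right _ _ hab)
          have := I.add_mem m1 hs
          convert this using 1; ring
        have e1 : f.eval a * (-(f.derivative.eval a * s - 1)) ∈ I ^ (k + 1) := by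
          rw [pow_succ]
          exact Ideal.mul_mem_mul ha (I.neg_mem hd)
        have e2 : c * s ^ 2 * (f.eval a * f.eval a) ∈ I ^ (k + 1) := by
          have hle : I ^ k * I ^ k ≤ I ^ (k + 1) := by
            rw [← pow_add]; exact Ideal.pow_le_pow_right (by omega)
          exact Ideal.mul_mem_left _ _ (hle (Ideal.mul_mem_mul ha ha))
        have := Ideal.add_mem _ e1 e2
        convert this using 1; ring

section Main
variable (F : Type*) [Field F] (K : Type*) [Field K] [Algebra F K] (ϖ : K)
    (R : Type*) [CommRing R] [Algebra F R]

/-- mapped evaluation at `1 ⊗ ϖ`. -/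
theorem tensorEval (p : Polynomial F) :
    Polynomial.eval₂ (algebraMap R (R ⊗[F] K)) ((1:R) ⊗ₜ[F] ϖ) (p.map (algebraMap F R))
      = (1:R) ⊗ₜ[F] (Polynomial.aeval ϖ p) := by
  rw [Polynomial.eval₂_map]
  have h4 : ((algebraMap R (R ⊗[F] K)).comp (algebraMap F R)) = algebraMap F (R ⊗[F] K) := by
    ext x; exact (IsScalarTower.algebraMap_apply F R (R ⊗[F] K) x).symm
  rw [h4]
  have : ((1:R) ⊗ₜ[F] ϖ) = Algebra.TensorProduct.includeRight (R := F) (A := R) ϖ := rfl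
  rw [this, ← Polynomial.aeval_def, Polynomial.aeval_algHom_apply]
  rfl

theorem X_dvd_substHom_minpoly :
    (X : Polynomial (R ⊗[F] K)) ∣ substHom F ϖ R ((minpoly F ϖ).map (algebraMap F R)) := by
  rw [Polynomial.X_dvd_iff, Polynomial.coeff_zero_eq_eval_zero]
  have h := Polynomial.hom_eval₂ ((minpoly F ϖ).map (algebraMap F R))
    ((Polynomial.C : (R ⊗[F] K) →+* Polynomial (R ⊗[F] K)).comp (algebraMap R (R ⊗[F] K)))
    (Polynomial.evalRingHom (0 : R ⊗[F] K))
    (Polynomial.X + Polynomial.C ((1 : R) ⊗ₜ[F] ϖ))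
  simp only [substHom, coe_eval₂RingHom] at h ⊢
  rw [show (Polynomial.eval (0 : R ⊗[F] K)) = ⇑(Polynomial.evalRingHom 0) from rfl, h]
  have h2 : ((evalRingHom (0:R ⊗[F] K)).comp
      ((Polynomial.C : (R ⊗[F] K) →+* Polynomial (R ⊗[F] K)).comp
        (algebraMap R (R ⊗[F] K)))) = algebraMap R (R ⊗[F] K) := by
    ext r; simp
  have h3 : (evalRingHom (0:R ⊗[F] K)) (Polynomial.X + Polynomial.C ((1 : R) ⊗ₜ[F] ϖ))
      = (1 : R) ⊗ₜ[F] ϖ := by simp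
  rw [h2, h3, tensorEval, minpoly.aeval, TensorProduct.tmul_zero]

end Main

set_option maxHeartbeats 1000000 in
/-- Let `K = F(ϖ)` with `ϖ` algebraic and separable over `F`, with minimal polynomial
`Q ∈ F[u]`. For any commutative `F`-algebra `R` and `n ≥ 1`, the `R`-algebra map
`R[u] → (R ⊗_F K)[z]/(zⁿ)`, `u ↦ z + 1⊗ϖ`, kills `Qⁿ`, hence descends to
`R[u]/(Qⁿ) → (R ⊗_F K)[z]/(zⁿ)`, and the descended homomorphism is an isomorphism. -/
theorem substHom_descends_and_bijective
    (F : Type*) [Field F] (K : Type*) [Field K] [Algebra F K] (ϖ : K)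
    (halg : IsIntegral F ϖ) (hsep : IsSeparable F ϖ)
    (hgen : Algebra.adjoin F ({ϖ} : Set K) = ⊤)
    (R : Type*) [CommRing R] [Algebra F R] (n : ℕ) (hn : 1 ≤ n) :
    substHom F ϖ R (((minpoly F ϖ).map (algebraMap F R)) ^ n) ∈
        Ideal.span ({(Polynomial.X : Polynomial (R ⊗[F] K)) ^ n} : Set _) ∧
      ∃ h0 : ∀ a ∈ Ideal.span ({((minpoly F ϖ).map (algebraMap F R)) ^ n} :
            Set (Polynomial R)),
          ((Ideal.Quotient.mk (Ideal.span
              ({(Polynomial.X : Polynomial (R ⊗[F] K)) ^ n} : Set _))).comp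
            (substHom F ϖ R)) a = 0,
        Function.Bijective
          (Ideal.Quotient.lift
            (Ideal.span ({((minpoly F ϖ).map (algebraMap F R)) ^ n} : Set (Polynomial R)))
            ((Ideal.Quotient.mk (Ideal.span
                ({(Polynomial.X : Polynomial (R ⊗[F] K)) ^ n} : Set _))).comp
              (substHom F ϖ R))
            h0) := by
  set Q : Polynomial F := minpoly F ϖ with hQ
  set QR : Polynomial R := Q.map (algebraMap F R) with hQR
  set T := R ⊗[F] K with hT
  set φ : Polynomial R →+* Polynomial T := substHom F ϖ R with hφ
  -- part 1
  have hXdvd : (X : Polynomial T) ∣ φ QR := X_dvd_substHom_minpoly F K ϖ R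
  have part1 : φ (QR ^ n) ∈ Ideal.span ({(X : Polynomial T) ^ n} : Set _) := by
    rw [map_pow, Ideal.mem_span_singleton]
    exact pow_dvd_pow_of_dvd hXdvd n
  set I_S : Ideal (Polynomial T) := Ideal.span ({(X : Polynomial T) ^ n} : Set _) with hIS
  set I_B : Ideal (Polynomial R) := Ideal.span ({QR ^ n} : Set _) with hIB
  set mkS := Ideal.Quotient.mk I_S with hmkS
  set mkB := Ideal.Quotient.mk I_B with hmkB
  have h0 : ∀ a ∈ I_B, (mkS.comp φ) a = 0 := by
    intro p hp
    rw [Ideal.mem_span_singleton] at hp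
    obtain ⟨c, rfl⟩ := hp
    rw [RingHom.comp_apply, map_mul, Ideal.Quotient.eq_zero_iff_mem]
    exact Ideal.mul_mem_right _ _ part1
  refine ⟨part1, h0, ?_⟩
  set φbar := Ideal.Quotient.lift I_B (mkS.comp φ) h0 with hφbar
  set B := Polynomial R ⧸ I_B with hB
  set γ : R →+* B := mkB.comp C with hγ
  -- the ideal generated by the image of QR in B is nilpotent
  have mkQR_pow : (mkB QR) ^ n = 0 := by
    rw [← map_pow, Ideal.Quotient.eq_zero_iff_mem]
    exact Ideal.subset_span rfl
  set JB : Ideal B := Ideal.span {mkB QR} with hJB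
  have hJBn : JB ^ n = ⊥ := by
    rw [hJB, Ideal.span_singleton_pow, mkQR_pow]
    simp
  -- evaluation of mapped polynomials at mkB X
  have hEV : ∀ p : Polynomial R, Polynomial.eval₂ γ (mkB X) p = mkB p := by
    intro p
    conv_rhs => rw [← Polynomial.eval₂_C_X (p := p)]
    exact (Polynomial.hom_eval₂ p C mkB X).symm
  -- separability: Bezout relation
  obtain ⟨A0, B0, hAB⟩ := hsep
  have hABR : (A0.map (algebraMap F R)) * QR
      + (B0.map (algebraMap F R)) * (QR.derivative) = 1 := by
    have := congrArg (Polynomial.map (algebraMap F R)) hAB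
    simpa [hQR, Polynomial.derivative_map, ← hQ] using this
  -- Newton iteration data
  set f : Polynomial B := QR.map γ with hf
  have hfeval : ∀ b : B, f.eval b = Polynomial.eval₂ γ b QR := fun b => by
    rw [hf, Polynomial.eval_map]
  have hfder : ∀ b : B, f.derivative.eval b = Polynomial.eval₂ γ b QR.derivative := fun b => by
    rw [hf, Polynomial.derivative_map, Polynomial.eval_map]
  have hb : f.eval (mkB X) ∈ JB := by
    rw [hfeval, hEV]
    exact Ideal.subset_span rfl
  have hs : f.derivative.eval (mkB X) * (mkB (B0.map (algebraMap F R))) - 1 ∈ JB := by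
    rw [hfder, hEV]
    have : (mkB QR.derivative) * (mkB (B0.map (algebraMap F R))) - 1
        = -(mkB (A0.map (algebraMap F R))) * mkB QR := by
      have := congrArg mkB hABR
      rw [map_add, map_mul, map_mul, map_one] at this
      linear_combination this
    rw [this]
    exact Ideal.mul_mem_left _ _ (Ideal.subset_span rfl)
  obtain ⟨a, haX, haroot0⟩ := newton_lemma f JB (mkB X) (mkB (B0.map (algebraMap F R))) hb hs n hn
  rw [hJBn] at haroot0
  have hroot : Polynomial.eval₂ γ a QR = 0 := by
    rw [← hfeval]; exact haroot0
  -- the map K → B through the root a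
  have hrootF : Polynomial.eval₂ (γ.comp (algebraMap F R)) a Q = 0 := by
    rw [← Polynomial.eval₂_map, ← hQR]; exact hroot
  set χ0 : AdjoinRoot Q →+* B := AdjoinRoot.lift (γ.comp (algebraMap F R)) a hrootF with hχ0
  -- algebraMap F B described explicitly
  have hFB : ∀ x : F, algebraMap F B x = mkB (C (algebraMap F R x)) := by
    intro x
    rw [IsScalarTower.algebraMap_apply F (Polynomial R) B x,
      IsScalarTower.algebraMap_apply F R (Polynomial R) x, Polynomial.algebraMap_eq]
    rfl
  set χalg : AdjoinRoot Q →ₐ[F] B :=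
    { χ0 with
      commutes' := fun x => by
        rw [RingHom.toMonoidHom_eq_coe, OneHom.toFun_eq_coe, MonoidHom.toOneHom_coe,
          MonoidHom.coe_coe, AdjoinRoot.algebraMap_eq, hχ0, AdjoinRoot.lift_of, hFB]
        rfl } with hχalg
  set e : AdjoinRoot Q ≃ₐ[F] K :=
    (minpoly.equivAdjoin halg).trans ((Subalgebra.equivOfEq _ _ hgen).trans
      Subalgebra.topEquiv) with he
  have he_root : e (AdjoinRoot.root Q) = ϖ := by
    rw [he]
    simp only [AlgEquiv.trans_apply]
    have h5 : (minpoly.equivAdjoin (R := F) halg) (AdjoinRoot.root Q)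
        = ⟨ϖ, Algebra.self_mem_adjoin_singleton F ϖ⟩ := by
      exact Subtype.ext (AdjoinRoot.Minpoly.coe_toAdjoin_mk_X (R := F) (x := ϖ))
    rw [h5]
    rfl
  set gK : K →ₐ[F] B := χalg.comp e.symm.toAlgHom with hgK
  have hgKϖ : gK ϖ = a := by
    have h1 : e.symm ϖ = AdjoinRoot.root Q := by
      rw [← he_root, AlgEquiv.symm_apply_apply]
    have h2 : gK ϖ = χalg (e.symm ϖ) := rfl
    rw [h2, h1]
    show χ0 (AdjoinRoot.root Q) = a
    rw [hχ0, AdjoinRoot.lift_root]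
  set fR : R →ₐ[F] B := IsScalarTower.toAlgHom F R B with hfR
  have hfRr : ∀ r : R, fR r = mkB (C r) := by
    intro r
    rw [hfR]
    show algebraMap R B r = mkB (C r)
    rw [IsScalarTower.algebraMap_apply R (Polynomial R) B r, Polynomial.algebraMap_eq]
    rfl
  set coeffT : T →ₐ[F] B := Algebra.TensorProduct.productMap fR gK with hcoeffT
  set ψ1 : Polynomial T →+* B :=
    Polynomial.eval₂RingHom (coeffT : T →+* B) (mkB X - a) with hψ1
  have hψ1span : ∀ p ∈ I_S, ψ1 p = 0 := by
    intro p hp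
    rw [Ideal.mem_span_singleton] at hp
    obtain ⟨c, rfl⟩ := hp
    have hXa : ψ1 ((X : Polynomial T) ^ n) = 0 := by
      rw [map_pow]
      have : ψ1 (X : Polynomial T) = mkB X - a := Polynomial.eval₂_X _ _
      rw [this]
      have hmem : mkB X - a ∈ JB := by
        have := JB.neg_mem haX
        rwa [neg_sub] at this
      have h6 : (mkB X - a) ^ n ∈ JB ^ n := Ideal.pow_mem_pow hmem n
      rw [hJBn] at h6
      exact Ideal.mem_bot.mp h6
    rw [map_mul, hXa, zero_mul]
  set ψ : (Polynomial T ⧸ I_S) →+* B := Ideal.Quotient.lift I_S ψ1 hψ1span with hψ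
  -- basic computation rules
  have hφbar_mk : ∀ p : Polynomial R, φbar (mkB p) = mkS (φ p) := fun p => rfl
  have hψ_mk : ∀ p : Polynomial T, ψ (mkS p) = ψ1 p := fun p => rfl
  have hφC : ∀ r : R, φ (C r) = C (algebraMap R T r) := fun r => by
    rw [hφ]
    show Polynomial.eval₂ _ _ (C r) = _
    rw [Polynomial.eval₂_C]
    rfl
  have hφX : φ X = X + C ((1:R) ⊗ₜ[F] ϖ) := by
    rw [hφ]
    show Polynomial.eval₂ _ _ (X : Polynomial R) = _
    rw [Polynomial.eval₂_X]
  have hψ1X : ψ1 (X : Polynomial T) = mkB X - a := Polynomial.eval₂_X _ _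
  have hψ1C : ∀ x : T, ψ1 (C x) = coeffT x := fun x => Polynomial.eval₂_C _ _
  have htmul : ∀ (r : R) (k : K), coeffT (r ⊗ₜ[F] k) = fR r * gK k := fun r k => rfl
  clear_value f χalg χ0 e gK coeffT fR ψ ψ1 φbar
  clear hχalg hχ0 hgK he he_root hcoeffT hψ1 hψ hf hfR hfeval hfder hb hs haroot0
  clear f χalg χ0 e
  clear hEV mkQR_pow hABR hrootF
  clear_value γ
  set zbar := mkS (X : Polynomial T) with hzbar
  set ϖS := mkS (C ((1:R) ⊗ₜ[F] ϖ)) with hϖS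
  have hznil : zbar ^ n = 0 := by
    rw [hzbar, ← map_pow, Ideal.Quotient.eq_zero_iff_mem]
    exact Ideal.subset_span rfl
  have hg : φbar.comp γ = (mkS.comp C).comp (algebraMap R T) := by
    rw [hγ]
    ext r
    simp only [RingHom.comp_apply]
    rw [hφbar_mk, hφC]
  have E2 : ∀ p : Polynomial F,
      Polynomial.eval₂ (φbar.comp γ) ϖS (p.map (algebraMap F R))
        = mkS (C ((1:R) ⊗ₜ[F] (Polynomial.aeval ϖ p))) := by
    intro p
    rw [hg]
    have h7 := Polynomial.hom_eval₂ (p.map (algebraMap F R)) (algebraMap R T)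
      (mkS.comp C) ((1:R) ⊗ₜ[F] ϖ)
    rw [tensorEval] at h7
    simp only [RingHom.coe_comp, Function.comp_apply] at h7
    rw [hϖS]
    exact h7.symm
  have E1 : Polynomial.eval₂ (φbar.comp γ) (φbar a) QR = 0 := by
    have h8 := Polynomial.hom_eval₂ QR γ φbar a
    rw [hroot, map_zero] at h8
    exact h8.symm
  -- ε = φbar a - ϖS lies in (zbar) and is killed
  have hφbarX : φbar (mkB X) = zbar + ϖS := by
    rw [hφbar_mk, hφX, map_add]
  have hε : φbar a - ϖS ∈ Ideal.span {zbar} := by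
    have hd : φbar a - ϖS = φbar (a - mkB X) + zbar := by
      rw [map_sub, hφbarX]; ring
    rw [hd]
    refine Ideal.add_mem _ ?_ (Ideal.subset_span rfl)
    rw [hJB, Ideal.mem_span_singleton] at haX
    obtain ⟨c, hc⟩ := haX
    rw [hc, map_mul]
    obtain ⟨w, hw⟩ := hXdvd
    have : φbar (mkB QR) = mkS (φ QR) := hφbar_mk QR
    suffices hdv : zbar ∣ φbar (mkB QR) * φbar c by
      obtain ⟨d, hd⟩ := hdv
      exact Ideal.mem_span_singleton'.mpr ⟨d, by rw [hd]; exact mul_comm d zbar⟩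
    refine Dvd.dvd.mul_right ?_ (φbar c)
    rw [this, hw, map_mul]
    exact dvd_mul_right (mkS (X : Polynomial T)) (mkS w)
  -- binomial expansion: the difference is killed by a unit
  have hαa : φbar a = ϖS := by
    set f2 : Polynomial (Polynomial T ⧸ I_S) := QR.map (φbar.comp γ) with hf2
    have hf2e : ∀ b, f2.eval b = Polynomial.eval₂ (φbar.comp γ) b QR := fun b => by
      rw [hf2, Polynomial.eval_map]
    have hf2d : ∀ b, f2.derivative.eval b
        = Polynomial.eval₂ (φbar.comp γ) b QR.derivative := fun b => by
      rw [hf2, Polynomial.derivative_map, Polynomial.eval_map]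
    set ε := φbar a - ϖS with hεdef
    obtain ⟨c, hc⟩ := f2.binomExpansion ϖS ε
    have hϖS0 : f2.eval ϖS = 0 := by
      rw [hf2e, hQR, E2, minpoly.aeval, TensorProduct.tmul_zero, map_zero, map_zero]
    have hα0 : f2.eval (ϖS + ε) = 0 := by
      rw [show ϖS + ε = φbar a by rw [hεdef]; ring, hf2e]
      exact E1
    rw [hα0, hϖS0, zero_add] at hc
    -- the derivative evaluates to a unit
    have hDval : f2.derivative.eval ϖS
        = mkS (C ((1:R) ⊗ₜ[F] (Polynomial.aeval ϖ Q.derivative))) := by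
      rw [hf2d, hQR, Polynomial.derivative_map]
      exact E2 Q.derivative
    have hc0unit : IsUnit (Polynomial.aeval ϖ Q.derivative) := by
      have := congrArg (Polynomial.aeval ϖ) hAB
      rw [map_add, map_mul, map_mul, map_one, ← hQ, minpoly.aeval, mul_zero, zero_add,
        mul_comm] at this
      exact IsUnit.of_mul_eq_one _ this
    have hDunit : IsUnit (f2.derivative.eval ϖS) := by
      rw [hDval]
      have h9 : mkS (C ((1:R) ⊗ₜ[F] (Polynomial.aeval ϖ Q.derivative)))
          = (mkS.comp ((C : T →+* Polynomial T).comp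
              (Algebra.TensorProduct.includeRight (R := F) (A := R) (B := K)).toRingHom))
            (Polynomial.aeval ϖ Q.derivative) := rfl
      rw [h9]
      exact hc0unit.map _
    have hεnil : IsNilpotent ε := by
      replace hε : zbar ∣ ε := by
        obtain ⟨d, hd⟩ := Ideal.mem_span_singleton'.mp hε
        exact ⟨d, by rw [← hd]; exact mul_comm d zbar⟩
      obtain ⟨t, ht⟩ := hε
      refine ⟨n, ?_⟩
      rw [ht, mul_pow zbar t n, hznil]
      exact zero_mul (t ^ n)
    have hcomm1 : Commute c ε := mul_comm c ε
    have hcεnil : IsNilpotent (c * ε) := hcomm1.isNilpotent_mul_left hεnil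
    have hcomm2 : Commute (c * ε) (f2.derivative.eval ϖS) := mul_comm (c * ε) (f2.derivative.eval ϖS)
    have hunit : IsUnit (f2.derivative.eval ϖS + c * ε) :=
      hcεnil.isUnit_add_left_of_commute hDunit hcomm2
    have hfinal : (f2.derivative.eval ϖS + c * ε) * ε = 0 := by
      linear_combination -hc
    have hε0 : ε = 0 := by have := (IsUnit.mul_right_eq_zero (M₀ := Polynomial T ⧸ I_S) hunit).mp hfinal; exact this
    rw [hεdef] at hε0
    linear_combination hε0
  -- φbar commutes with the F-algebra structure
  have hφbarFB : ∀ x : F, φbar (algebraMap F B x)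
      = @algebraMap F (Polynomial T ⧸ I_S) _ _ (Ideal.Quotient.algebra F) x := by
    intro x
    rw [hFB x, hφbar_mk, hφC]
    rw [IsScalarTower.algebraMap_apply F (Polynomial T) (Polynomial T ⧸ I_S) x,
      Ideal.Quotient.algebraMap_eq, IsScalarTower.algebraMap_apply F T (Polynomial T) x,
      Polynomial.algebraMap_eq, IsScalarTower.algebraMap_apply F R T x, hmkS]
  set Φ : B →ₐ[F] (Polynomial T ⧸ I_S) :=
    { φbar with
      commutes' := fun x => by
        rw [RingHom.toMonoidHom_eq_coe, OneHom.toFun_eq_coe, MonoidHom.toOneHom_coe,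
          MonoidHom.coe_coe]
        exact hφbarFB x } with hΦ
  have hΦapp : ∀ b : B, Φ b = φbar b := fun b => rfl
  set Rh : K →ₐ[F] (Polynomial T ⧸ I_S) :=
    ((Ideal.Quotient.mkₐ F I_S).comp (Polynomial.CAlgHom (R := F) (A := T))).comp
      (Algebra.TensorProduct.includeRight (R := F) (A := R) (B := K)) with hRh
  have hRhapp : ∀ k : K, Rh k = mkS (C ((1:R) ⊗ₜ[F] k)) := fun k => rfl
  have claim2 : ∀ k : K, φbar (gK k) = mkS (C ((1:R) ⊗ₜ[F] k)) := by
    have hadj : Algebra.adjoin F ({ϖ} : Set K) ≤ AlgHom.equalizer (Φ.comp gK) Rh := by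
      apply Algebra.adjoin_le
      intro x hx
      rcases Set.mem_singleton_iff.mp hx with rfl
      show Φ (gK x) = Rh x
      rw [hΦapp, hgKϖ, hαa, hRhapp]
    intro k
    have hk : k ∈ AlgHom.equalizer (Φ.comp gK) Rh := by
      apply hadj
      rw [hgen]
      exact Algebra.mem_top
    have hkk : (Φ.comp gK) k = Rh k := hk
    rw [AlgHom.comp_apply, hΦapp, hRhapp] at hkk
    exact hkk
  have halgRT : ∀ r : R, algebraMap R T r = r ⊗ₜ[F] (1:K) := fun r => rfl
  have claim1 : ∀ r : R, φbar (fR r) = mkS (C (r ⊗ₜ[F] (1:K))) := by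
    intro r
    rw [hfRr, hφbar_mk, hφC, halgRT]
  -- left identity : ψ ∘ φbar = id
  have hBext : (ψ.comp φbar).comp mkB = mkB := by
    apply Polynomial.ringHom_ext
    · intro r
      show ψ (φbar (mkB (C r))) = mkB (C r)
      rw [hφbar_mk, hφC, hψ_mk, hψ1C, halgRT, htmul, map_one, mul_one, hfRr]
    · show ψ (φbar (mkB X)) = mkB X
      rw [hφbarX, map_add]
      have h1 : ψ zbar = mkB X - a := by rw [hzbar, hψ_mk, hψ1X]
      have h2 : ψ ϖS = a := by
        rw [hϖS, hψ_mk, hψ1C, htmul, map_one, one_mul, hgKϖ]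
      rw [h1, h2]
      ring
  -- right identity : φbar ∘ ψ = id
  have hSext : (φbar.comp ψ).comp mkS = mkS := by
    apply Polynomial.ringHom_ext
    · intro x
      show φbar (ψ (mkS (C x))) = mkS (C x)
      rw [hψ_mk, hψ1C]
      induction x using TensorProduct.induction_on with
      | zero => simp
      | tmul r k =>
        have htt : (r ⊗ₜ[F] (1:K)) * ((1:R) ⊗ₜ[F] k) = r ⊗ₜ[F] k := by
          rw [Algebra.TensorProduct.tmul_mul_tmul, mul_one, one_mul]
        rw [htmul, map_mul, claim1, claim2, ← map_mul, ← map_mul, htt]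
      | add x y hx hy =>
        rw [map_add, map_add, hx, hy, ← map_add, ← map_add]
    · show φbar (ψ (mkS X)) = mkS X
      rw [hψ_mk, hψ1X, map_sub, hφbarX, hαa]
      ring
  -- conclude
  have hleft : Function.LeftInverse ψ φbar := by
    intro b
    obtain ⟨p, rfl⟩ := Ideal.Quotient.mk_surjective (I := I_B) b
    exact RingHom.congr_fun hBext p
  have hright : Function.RightInverse ψ φbar := by
    intro s
    obtain ⟨p, rfl⟩ := Ideal.Quotient.mk_surjective (I := I_S) s
    exact RingHom.congr_fun hSext p
  exact ⟨hleft.injective, hright.surjective⟩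
end

section
/- Let F be a field and K = F(ϖ) a field extension generated by an element ϖ that is algebraic and separable over F, with minimal polynomial Q ∈ F[u]. Then the (Q)-adic completion of the polynomial ring F[u], namely the inverse limit lim_n F[u]/(Qⁿ) along the natural projections, is isomorphic as an F-algebra to the formal power series ring K⟦z⟧. -/
open Polynomial PowerSeries

namespace AdicPSAux

variable {F : Type*} [Field F] {K : Type*} [Field K] [Algebra F K] (ϖ : K)

/-- The substitution `u ↦ ϖ + z` from `F[u]` to `K⟦z⟧`. -/
noncomputable def phi : Polynomial F →ₐ[F] PowerSeries K :=
  Polynomial.aeval (PowerSeries.C (R := K) ϖ + PowerSeries.X)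

lemma phi_eq (p : Polynomial F) :
    phi ϖ p = ((Polynomial.taylor ϖ (p.map (algebraMap F K)) : Polynomial K) : PowerSeries K) := by
  have h : (phi ϖ p : PowerSeries K)
      = (Polynomial.coeToPowerSeries.algHom K).restrictScalars F
          (Polynomial.aeval (Polynomial.C ϖ + Polynomial.X) p) := by
    rw [phi, ← Polynomial.aeval_algHom_apply]
    congr 1
    simp [Polynomial.coeToPowerSeries.algHom_apply, Polynomial.coe_add]
  rw [h]
  have h2 : (Polynomial.aeval (Polynomial.C ϖ + Polynomial.X) p : Polynomial K)
      = Polynomial.taylor ϖ (p.map (algebraMap F K)) := by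
    rw [Polynomial.taylor_apply, Polynomial.aeval_def, Polynomial.eval₂_eq_eval_map,
      Polynomial.comp, Polynomial.eval₂_eq_eval_map, Polynomial.map_map,
      add_comm (Polynomial.C ϖ)]
    congr 1
  rw [h2]
  simp [Polynomial.coeToPowerSeries.algHom_apply]

lemma constantCoeff_phi (p : Polynomial F) :
    PowerSeries.constantCoeff (R := K) (phi ϖ p) = Polynomial.aeval ϖ p := by
  rw [phi, Polynomial.aeval_def, Polynomial.hom_eval₂]
  simp only [map_add, PowerSeries.constantCoeff_C, PowerSeries.constantCoeff_X, add_zero]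
  rw [Polynomial.aeval_def]
  congr 1

lemma coeff_one_phi (p : Polynomial F) :
    PowerSeries.coeff (R := K) 1 (phi ϖ p) = Polynomial.aeval ϖ (Polynomial.derivative p) := by
  rw [phi_eq, Polynomial.coeff_coe, Polynomial.taylor_coeff_one, Polynomial.derivative_map,
    Polynomial.eval_map, Polynomial.aeval_def]

lemma exists_unit_factor (halg : IsIntegral F ϖ) (hsep : IsSeparable F ϖ) :
    ∃ w : PowerSeries K, phi ϖ (minpoly F ϖ) = PowerSeries.X * w ∧ IsUnit w := by
  have h0 : PowerSeries.constantCoeff (R := K) (phi ϖ (minpoly F ϖ)) = 0 := by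
    rw [constantCoeff_phi, minpoly.aeval]
  obtain ⟨w, hw⟩ := PowerSeries.X_dvd_iff.mpr h0
  refine ⟨w, hw, ?_⟩
  rw [PowerSeries.isUnit_iff_constantCoeff]
  have hder : Polynomial.aeval ϖ (Polynomial.derivative (minpoly F ϖ)) ≠ 0 := by
    intro hz
    have hdvd : minpoly F ϖ ∣ Polynomial.derivative (minpoly F ϖ) := minpoly.dvd F ϖ hz
    have hsep' : (minpoly F ϖ).Separable := hsep
    have : IsUnit (minpoly F ϖ) := IsCoprime.isUnit_of_dvd' hsep' dvd_rfl hdvd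
    exact (minpoly.irreducible halg).not_isUnit this
  have : PowerSeries.constantCoeff (R := K) w = PowerSeries.coeff (R := K) 1 (phi ϖ (minpoly F ϖ)) := by
    rw [hw, PowerSeries.coeff_succ_X_mul, PowerSeries.coeff_zero_eq_constantCoeff]
  rw [this, coeff_one_phi]
  exact isUnit_iff_ne_zero.mpr hder

end AdicPSAux

set_option maxHeartbeats 1000000 in
/-- Let `K = F(ϖ)` with `ϖ` algebraic and separable over `F`, with minimal polynomial
`Q ∈ F[u]`. Then the `(Q)`-adic completion of `F[u]`, i.e. the inverse limit
`lim_n F[u]/(Qⁿ)`, is isomorphic as an `F`-algebra to the power series ring `K⟦z⟧`. -/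
theorem adicCompletion_polynomial_equiv_powerSeries
    (F : Type*) [Field F] (K : Type*) [Field K] [Algebra F K] (ϖ : K)
    (halg : IsIntegral F ϖ) (hsep : IsSeparable F ϖ)
    (hgen : Algebra.adjoin F ({ϖ} : Set K) = ⊤) :
    ∃ e : AdicCompletion (Ideal.span {minpoly F ϖ}) (Polynomial F) ≃+* PowerSeries K,
      ∀ a : F,
        e (algebraMap (Polynomial F)
            (AdicCompletion (Ideal.span {minpoly F ϖ}) (Polynomial F)) (Polynomial.C a)) =
          PowerSeries.C (R := K) (algebraMap F K a) := by
  classical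
  obtain ⟨w, hw, hwu⟩ := AdicPSAux.exists_unit_factor ϖ halg hsep
  set Q : Polynomial F := minpoly F ϖ with hQ
  set I : Ideal (Polynomial F) := Ideal.span {Q} with hI
  set φ : Polynomial F →ₐ[F] PowerSeries K := AdicPSAux.phi ϖ with hφ
  have hXne : (PowerSeries.X : PowerSeries K) ≠ 0 := PowerSeries.X_ne_zero
  -- membership in powers of `I`
  have hmem : ∀ (n : ℕ) (p : Polynomial F),
      p ∈ (I ^ n • ⊤ : Ideal (Polynomial F)) ↔ Q ^ n ∣ p := by
    intro n p
    rw [smul_eq_mul, Ideal.mul_top, hI, Ideal.span_singleton_pow, Ideal.mem_span_singleton]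
  -- forward divisibility
  have hfwd : ∀ (n : ℕ) (p : Polynomial F), Q ^ n ∣ p →
      (PowerSeries.X : PowerSeries K) ^ n ∣ φ p := by
    rintro n p ⟨t, rfl⟩
    refine ⟨w ^ n * φ t, ?_⟩
    rw [map_mul, map_pow, hw, mul_pow]
    ring
  -- backward divisibility
  have hinj : ∀ (n : ℕ) (p : Polynomial F),
      (PowerSeries.X : PowerSeries K) ^ n ∣ φ p → Q ^ n ∣ p := by
    intro n
    induction n with
    | zero => intro p _; simpa using one_dvd p
    | succ n ih =>
      intro p hp
      have h0 : Polynomial.aeval ϖ p = 0 := by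
        rw [← AdicPSAux.constantCoeff_phi ϖ p]
        have hX : (PowerSeries.X : PowerSeries K) ∣ φ p :=
          dvd_trans (dvd_pow_self _ (Nat.succ_ne_zero n)) hp
        exact PowerSeries.X_dvd_iff.mp hX
      obtain ⟨t, ht⟩ := minpoly.dvd F ϖ h0
      have hφp : φ p = PowerSeries.X * (w * φ t) := by
        rw [ht, map_mul, hw]; ring
      rw [hφp, pow_succ'] at hp
      have h2 : (PowerSeries.X : PowerSeries K) ^ n ∣ w * φ t :=
        (mul_dvd_mul_iff_left hXne).mp hp
      have h3 : (PowerSeries.X : PowerSeries K) ^ n ∣ φ t := (hwu.dvd_mul_left).mp h2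
      rw [ht, pow_succ']
      exact mul_dvd_mul_left Q (ih t h3)
  -- surjectivity of evaluation
  have haev : Function.Surjective (Polynomial.aeval ϖ : Polynomial F →ₐ[F] K) := by
    have h := Algebra.adjoin_singleton_eq_range_aeval F ϖ
    intro c
    have hc : c ∈ (Polynomial.aeval ϖ : Polynomial F →ₐ[F] K).range := by
      rw [← h, hgen]; exact Algebra.mem_top
    exact (AlgHom.mem_range _).mp hc
  -- approximate surjectivity of φ
  have hsurj : ∀ (n : ℕ) (f : PowerSeries K), ∃ p : Polynomial F,
      (PowerSeries.X : PowerSeries K) ^ n ∣ (f - φ p) := by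
    intro n
    induction n with
    | zero => intro f; exact ⟨0, by simp⟩
    | succ n ih =>
      intro f
      obtain ⟨p, g, hg⟩ := ih f
      obtain ⟨q, hq⟩ := haev
        ((PowerSeries.constantCoeff (R := K) g) / (PowerSeries.constantCoeff (R := K) w) ^ n)
      refine ⟨p + Q ^ n * q, ?_⟩
      have hkey : f - φ (p + Q ^ n * q)
          = PowerSeries.X ^ n * (g - w ^ n * φ q) := by
        have h1 : f - φ p = PowerSeries.X ^ n * g := hg
        rw [map_add, map_mul, map_pow, hw, show f - (φ p + (PowerSeries.X * w) ^ n * φ q)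
          = (f - φ p) - (PowerSeries.X * w) ^ n * φ q by ring, h1, mul_pow]
        ring
      rw [hkey, pow_succ]
      refine mul_dvd_mul_left _ ?_
      rw [PowerSeries.X_dvd_iff, map_sub, map_mul, map_pow, AdicPSAux.constantCoeff_phi, hq]
      have hcw : PowerSeries.constantCoeff (R := K) w ≠ 0 := by
        intro h; rw [PowerSeries.isUnit_iff_constantCoeff, h] at hwu
        exact (not_isUnit_zero hwu)
      field_simp
      ring
  -- lifts out of the quotients
  have hout : ∀ (n : ℕ) (y : Polynomial F ⧸ (I ^ n • ⊤ : Ideal (Polynomial F))),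
      ∃ p : Polynomial F, Ideal.Quotient.mk (I ^ n • ⊤ : Ideal (Polynomial F)) p = y :=
    fun n y => Ideal.Quotient.mk_surjective y
  choose out hout using hout
  -- coefficient congruence
  have hcong : ∀ (n : ℕ) (p q : Polynomial F),
      Ideal.Quotient.mk (I ^ (n + 1) • ⊤ : Ideal (Polynomial F)) p
        = Ideal.Quotient.mk (I ^ (n + 1) • ⊤ : Ideal (Polynomial F)) q →
      PowerSeries.coeff (R := K) n (φ p) = PowerSeries.coeff (R := K) n (φ q) := by
    intro n p q h
    have hsub : Q ^ (n + 1) ∣ (p - q) :=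
      (hmem _ _).mp ((Ideal.Quotient.mk_eq_mk_iff_sub_mem p q).mp h)
    have hX := hfwd _ _ hsub
    have h0 := (PowerSeries.X_pow_dvd_iff.mp hX) n (Nat.lt_succ_self n)
    rw [map_sub, map_sub] at h0
    exact sub_eq_zero.mp h0
  -- the underlying map of the equivalence
  set E : AdicCompletion I (Polynomial F) → PowerSeries K := fun x =>
    PowerSeries.mk fun n => PowerSeries.coeff (R := K) n (φ (out (n + 1) (x.val (n + 1)))) with hE
  have hcoeffE : ∀ (x : AdicCompletion I (Polynomial F)) (n : ℕ),
      PowerSeries.coeff (R := K) n (E x)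
        = PowerSeries.coeff (R := K) n (φ (out (n + 1) (x.val (n + 1)))) := by
    intro x n; rw [hE]; exact PowerSeries.coeff_mk n _
  have hkey : ∀ (x : AdicCompletion I (Polynomial F)) (n m : ℕ) (p : Polynomial F),
      n < m → Ideal.Quotient.mk (I ^ m • ⊤ : Ideal (Polynomial F)) p = x.val m →
      PowerSeries.coeff (R := K) n (E x) = PowerSeries.coeff (R := K) n (φ p) := by
    intro x n m p hnm hp
    have h1 : Ideal.Quotient.mk (I ^ (n + 1) • ⊤ : Ideal (Polynomial F)) p = x.val (n + 1) := by
      have h2 := AdicCompletion.transitionMap_comp_eval_apply (I := I)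
        (M := Polynomial F) (show n + 1 ≤ m from hnm) x
      rw [← h2, ← hp, AdicCompletion.transitionMap_ideal_mk]
    rw [hcoeffE]
    exact hcong n _ p (by rw [hout, h1])
  -- E is a ring homomorphism
  set E0 : AdicCompletion I (Polynomial F) →+* PowerSeries K :=
    { toFun := E
      map_one' := by
        show E 1 = 1
        apply PowerSeries.ext; intro n
        have h1 : Ideal.Quotient.mk (I ^ (n + 1) • ⊤ : Ideal (Polynomial F)) 1
            = (1 : AdicCompletion I (Polynomial F)).val (n + 1) := by
          rw [AdicCompletion.val_one, map_one]
        rw [hkey 1 n (n + 1) 1 (Nat.lt_succ_self n) h1, map_one]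
      map_mul' := by
        intro x y
        show E (x * y) = E x * E y
        apply PowerSeries.ext; intro n
        have hmk : ∀ z : AdicCompletion I (Polynomial F),
            Ideal.Quotient.mk (I ^ (n + 1) • ⊤ : Ideal (Polynomial F))
              (out (n + 1) (z.val (n + 1))) = z.val (n + 1) := fun z => hout _ _
        have h3 : Ideal.Quotient.mk (I ^ (n + 1) • ⊤ : Ideal (Polynomial F))
            (out (n + 1) (x.val (n + 1)) * out (n + 1) (y.val (n + 1)))
              = (x * y).val (n + 1) := by
          rw [map_mul, hmk x, hmk y, AdicCompletion.val_mul]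
        rw [hkey (x * y) n (n + 1) _ (Nat.lt_succ_self n) h3, map_mul,
          PowerSeries.coeff_mul, PowerSeries.coeff_mul]
        refine Finset.sum_congr rfl ?_
        rintro ⟨i, j⟩ hij
        have hij : i + j = n := Finset.HasAntidiagonal.mem_antidiagonal.mp hij
        rw [hkey x i (n + 1) _ (by omega) (hmk x), hkey y j (n + 1) _ (by omega) (hmk y)]
      map_zero' := by
        show E 0 = 0
        apply PowerSeries.ext; intro n
        have h1 : Ideal.Quotient.mk (I ^ (n + 1) • ⊤ : Ideal (Polynomial F)) 0
            = (0 : AdicCompletion I (Polynomial F)).val (n + 1) := by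
          rw [AdicCompletion.val_zero_apply, map_zero]
        rw [hkey 0 n (n + 1) 0 (Nat.lt_succ_self n) h1, map_zero]
      map_add' := by
        intro x y
        show E (x + y) = E x + E y
        apply PowerSeries.ext; intro n
        have hmk : ∀ z : AdicCompletion I (Polynomial F),
            Ideal.Quotient.mk (I ^ (n + 1) • ⊤ : Ideal (Polynomial F))
              (out (n + 1) (z.val (n + 1))) = z.val (n + 1) := fun z => hout _ _
        have h3 : Ideal.Quotient.mk (I ^ (n + 1) • ⊤ : Ideal (Polynomial F))
            (out (n + 1) (x.val (n + 1)) + out (n + 1) (y.val (n + 1)))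
              = (x + y).val (n + 1) := by
          rw [map_add, hmk x, hmk y, AdicCompletion.val_add_apply]
        rw [hkey (x + y) n (n + 1) _ (Nat.lt_succ_self n) h3, map_add, map_add, map_add,
          hkey x n (n + 1) _ (Nat.lt_succ_self n) (hmk x),
          hkey y n (n + 1) _ (Nat.lt_succ_self n) (hmk y)] } with hE0
  have hE0app : ∀ x, E0 x = E x := fun _ => rfl
  -- value on the image of polynomials
  have hvalAlg : ∀ (p : Polynomial F) (m : ℕ),
      (algebraMap (Polynomial F) (AdicCompletion I (Polynomial F)) p).val m
        = Ideal.Quotient.mk (I ^ m • ⊤ : Ideal (Polynomial F)) p := by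
    intro p m
    rfl
  have hE0alg : ∀ p : Polynomial F,
      E0 (algebraMap (Polynomial F) (AdicCompletion I (Polynomial F)) p) = φ p := by
    intro p
    apply PowerSeries.ext; intro n
    rw [hE0app, hkey _ n (n + 1) p (Nat.lt_succ_self n) (hvalAlg p (n + 1)).symm]
  -- injectivity
  have hker : ∀ x, E0 x = 0 → x = 0 := by
    intro x hx
    apply AdicCompletion.ext; intro n
    have hmk : Ideal.Quotient.mk (I ^ n • ⊤ : Ideal (Polynomial F))
        (out n (x.val n)) = x.val n := hout _ _
    have hdvd : (PowerSeries.X : PowerSeries K) ^ n ∣ φ (out n (x.val n)) := by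
      rw [PowerSeries.X_pow_dvd_iff]
      intro m hm
      have h1 := hkey x m n _ hm hmk
      rw [hE0app] at hx
      rw [hx] at h1
      simpa using h1.symm
    have hQn : Q ^ n ∣ out n (x.val n) := hinj n _ hdvd
    rw [AdicCompletion.val_zero_apply, ← hmk, Ideal.Quotient.eq_zero_iff_mem]
    exact (hmem n _).mpr hQn
  have hinjE : Function.Injective E0 := by
    intro a b hab
    have h := hker (a - b) (by rw [E0.map_sub, hab, sub_self])
    exact sub_eq_zero.mp h
  -- surjectivity
  have hsurE : Function.Surjective E0 := by
    intro f
    choose p hp using fun n => hsurj n f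
    have hcomp : ∀ {m n : ℕ}, m ≤ n →
        Ideal.Quotient.mk (I ^ m • ⊤ : Ideal (Polynomial F)) (p n)
          = Ideal.Quotient.mk (I ^ m • ⊤ : Ideal (Polynomial F)) (p m) := by
      intro m n hmn
      rw [Ideal.Quotient.mk_eq_mk_iff_sub_mem]
      refine (hmem m _).mpr (hinj m _ ?_)
      have h1 : (PowerSeries.X : PowerSeries K) ^ m ∣ f - φ (p n) :=
        dvd_trans (pow_dvd_pow _ hmn) (hp n)
      have h2 := hp m
      have h3 : φ (p n - p m) = (f - φ (p m)) - (f - φ (p n)) := by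
        rw [map_sub]; ring
      rw [h3]
      exact dvd_sub h2 h1
    have hprop : (fun n => Ideal.Quotient.mk (I ^ n • ⊤ : Ideal (Polynomial F)) (p n))
        ∈ AdicCompletion.submodule I (Polynomial F) := by
      intro m n hmn
      rw [AdicCompletion.transitionMap_ideal_mk, hcomp hmn]
    refine ⟨show AdicCompletion I (Polynomial F) from
      ⟨fun n => Ideal.Quotient.mk (I ^ n • ⊤ : Ideal (Polynomial F)) (p n),
        fun hmn => by beta_reduce; rw [AdicCompletion.transitionMap_ideal_mk, hcomp hmn]⟩, ?_⟩
    rw [hE0app]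
    apply PowerSeries.ext; intro n
    rw [hkey _ n (n + 1) (p (n + 1)) (Nat.lt_succ_self n) rfl]
    have h0 := (PowerSeries.X_pow_dvd_iff.mp (hp (n + 1))) n (Nat.lt_succ_self n)
    rw [map_sub] at h0
    exact (sub_eq_zero.mp h0).symm
  refine ⟨RingEquiv.ofBijective E0 (show Function.Bijective E0 from ⟨hinjE, hsurE⟩), ?_⟩
  intro a
  rw [RingEquiv.ofBijective_apply, hE0alg]
  rw [hφ, AdicPSAux.phi, Polynomial.aeval_C, PowerSeries.algebraMap_apply]
end
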